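/- Assume (A12, A22) is observable and (A, B) is controllable, and let K ∈ ℝ^{(n−p)×p}. Define A_d := [[0_{p×p}, A12],[0, A22 + K·A12]] ∈ ℝ^{n×n}, B_d := [[A11 − A12·K, B1],[A_K, K·B1 + B2]] ∈ ℝ^{n×(p+m)}, and C_d := [I_p, 0] ∈ ℝ^{p×n}. Then for every μ ∈ ℂ the complexified stacked matrix [A_d − μI_n; C_d] has full column rank n and the complexified matrix [A_d − μI_n, B_d] has full row rank n; that is, this order-n realization of K_d(λ) := [λ^{-1}·W, λ^{-1}·V] is observable and controllable, hence minimal. -/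

import Mathlib

open Matrix Polynomial

set_option synthInstance.maxHeartbeats 1000000
set_option maxHeartbeats 1000000

noncomputable section

/-- The field of real rational functions. -/
abbrev FF : Type := RatFunc ℝ

/-- The rational function `λ` (the image of the polynomial indeterminate `X`). -/
noncomputable def lam : FF := RatFunc.X

/-- Entrywise embedding of a real matrix into matrices over `FF`. -/
noncomputable def mapF {k l : Type} (M : Matrix k l ℝ) : Matrix k l FF :=
  M.map (algebraMap ℝ FF)

/-- The pencil `λ I - M` over `FF`, for a real square matrix `M`. -/
noncomputable def lamI {k : Type} [Fintype k] [DecidableEq k] (M : Matrix k k ℝ) :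
    Matrix k k FF := lam • (1 : Matrix k k FF) - mapF M

/-- Entrywise complexification of a real matrix. -/
def mapC {k l : Type} (M : Matrix k l ℝ) : Matrix k l ℂ :=
  M.map (algebraMap ℝ ℂ)

/-- A real rational function is stable if every complex root of its reduced denominator
has real part `< 0`. -/
def StableF (f : RatFunc ℝ) : Prop :=
  ∀ z : ℂ, ((f.denom).map (algebraMap ℝ ℂ)).IsRoot z → z.re < 0

/-- A real square matrix is Hurwitz if all roots of its characteristic polynomial
have real part `< 0`. -/
def IsHurwitz {k : Type} [Fintype k] [DecidableEq k] (M : Matrix k k ℝ) : Prop :=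
  ∀ z : ℂ, ((M.charpoly).map (algebraMap ℝ ℂ)).IsRoot z → z.re < 0

/-- `A_K := K A11 - K A12 K + A21 - A22 K`. -/
noncomputable def AKmat {p r : ℕ} (A11 : Matrix (Fin p) (Fin p) ℝ)
    (A12 : Matrix (Fin p) (Fin r) ℝ) (A21 : Matrix (Fin r) (Fin p) ℝ)
    (A22 : Matrix (Fin r) (Fin r) ℝ) (K : Matrix (Fin r) (Fin p) ℝ) :
    Matrix (Fin r) (Fin p) ℝ :=
  K * A11 - K * A12 * K + A21 - A22 * K

/-- The `W` member of the SRTR pair obtained from `K`. -/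
noncomputable def srtrW {p r : ℕ} (A11 : Matrix (Fin p) (Fin p) ℝ)
    (A12 : Matrix (Fin p) (Fin r) ℝ) (A21 : Matrix (Fin r) (Fin p) ℝ)
    (A22 : Matrix (Fin r) (Fin r) ℝ) (K : Matrix (Fin r) (Fin p) ℝ) :
    Matrix (Fin p) (Fin p) FF :=
  mapF (A11 - A12 * K) +
    mapF A12 * (lamI (A22 + K * A12))⁻¹ * mapF (AKmat A11 A12 A21 A22 K)

/-- The `V` member of the SRTR pair obtained from `K`. -/
noncomputable def srtrV {p r m : ℕ} (A12 : Matrix (Fin p) (Fin r) ℝ)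
    (A22 : Matrix (Fin r) (Fin r) ℝ) (B1 : Matrix (Fin p) (Fin m) ℝ)
    (B2 : Matrix (Fin r) (Fin m) ℝ) (K : Matrix (Fin r) (Fin p) ℝ) :
    Matrix (Fin p) (Fin m) FF :=
  mapF B1 + mapF A12 * (lamI (A22 + K * A12))⁻¹ * mapF (K * B1 + B2)

/-- The plant transfer function `G = [I_p 0] (λ I_n - A)⁻¹ B`. -/
noncomputable def plantG {p r m : ℕ} (A11 : Matrix (Fin p) (Fin p) ℝ)
    (A12 : Matrix (Fin p) (Fin r) ℝ) (A21 : Matrix (Fin r) (Fin p) ℝ)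
    (A22 : Matrix (Fin r) (Fin r) ℝ) (B1 : Matrix (Fin p) (Fin m) ℝ)
    (B2 : Matrix (Fin r) (Fin m) ℝ) : Matrix (Fin p) (Fin m) FF :=
  fromCols (1 : Matrix (Fin p) (Fin p) FF) (0 : Matrix (Fin p) (Fin r) FF) *
    (lamI (fromBlocks A11 A12 A21 A22))⁻¹ * mapF (fromRows B1 B2)

/-- `(A12, A22)` is observable: `[A22 - μ I ; A12]` has full column rank for all `μ : ℂ`. -/
def ObsPair {p r : ℕ} (A12 : Matrix (Fin p) (Fin r) ℝ)
    (A22 : Matrix (Fin r) (Fin r) ℝ) : Prop :=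
  ∀ μ : ℂ, (fromRows (mapC A22 - μ • (1 : Matrix (Fin r) (Fin r) ℂ)) (mapC A12)).rank = r

/-- `(A, B)` is controllable: `[A - μ I, B]` has full row rank for all `μ : ℂ`. -/
def CtrbPair {p r m : ℕ} (A : Matrix (Fin p ⊕ Fin r) (Fin p ⊕ Fin r) ℝ)
    (B : Matrix (Fin p ⊕ Fin r) (Fin m) ℝ) : Prop :=
  ∀ μ : ℂ, (fromCols (mapC A - μ • (1 : Matrix (Fin p ⊕ Fin r) (Fin p ⊕ Fin r) ℂ))
    (mapC B)).rank = p + r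

section AuxLemmas

private lemma mapC_add {k l : Type} (M N : Matrix k l ℝ) :
    mapC (M + N) = mapC M + mapC N := by
  ext i j; simp [mapC]

private lemma mapC_sub {k l : Type} (M N : Matrix k l ℝ) :
    mapC (M - N) = mapC M - mapC N := by
  ext i j; simp [mapC]

private lemma mapC_mul {k l o : Type} [Fintype l] (M : Matrix k l ℝ) (N : Matrix l o ℝ) :
    mapC (M * N) = mapC M * mapC N := by
  ext i j; simp [mapC, Matrix.mul_apply]

private lemma mapC_fromBlocks {a b c d : Type} (A : Matrix a b ℝ) (B : Matrix a d ℝ)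
    (C : Matrix c b ℝ) (D : Matrix c d ℝ) :
    mapC (fromBlocks A B C D) = fromBlocks (mapC A) (mapC B) (mapC C) (mapC D) := by
  ext (i | i) (j | j) <;> simp [mapC]

private lemma mapC_fromRows {a b c : Type} (A : Matrix a c ℝ) (B : Matrix b c ℝ) :
    mapC (fromRows A B) = fromRows (mapC A) (mapC B) := by
  ext (i | i) j <;> simp [mapC]

private lemma mapC_fromColumns {a b c : Type} (A : Matrix a b ℝ) (B : Matrix a c ℝ) :
    mapC (fromCols A B) = fromCols (mapC A) (mapC B) := by
  ext i (j | j) <;> simp [mapC]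

private lemma mapC_zero {k l : Type} : mapC (0 : Matrix k l ℝ) = 0 := by
  ext i j; simp [mapC]

private lemma mapC_one {k : Type} [Fintype k] [DecidableEq k] :
    mapC (1 : Matrix k k ℝ) = 1 := by
  ext i j; simp [mapC, Matrix.one_apply, apply_ite]

private lemma rank_eq_card_of_inj {a b : Type} [Fintype a] [Fintype b] [DecidableEq b]
    (M : Matrix a b ℂ) (h : ∀ x : b → ℂ, M *ᵥ x = 0 → x = 0) :
    M.rank = Fintype.card b := by
  have hinj : Function.Injective M.mulVecLin :=
    LinearMap.ker_eq_bot.mp (LinearMap.ker_eq_bot'.mpr fun x hx => h x hx)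
  rw [Matrix.rank, LinearMap.finrank_range_of_inj hinj,
    Module.finrank_fintype_fun_eq_card]

private lemma inj_of_rank_eq_card {a b : Type} [Fintype a] [Fintype b] [DecidableEq b]
    (M : Matrix a b ℂ) (h : M.rank = Fintype.card b) :
    ∀ x : b → ℂ, M *ᵥ x = 0 → x = 0 := by
  have h2 := LinearMap.finrank_range_add_finrank_ker M.mulVecLin
  rw [Module.finrank_fintype_fun_eq_card] at h2
  rw [show Module.finrank ℂ (LinearMap.range M.mulVecLin) = M.rank from rfl, h] at h2
  have hk : LinearMap.ker M.mulVecLin = ⊥ :=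
    Submodule.finrank_eq_zero.mp (by omega)
  intro x hx
  have : x ∈ LinearMap.ker M.mulVecLin := hx
  rwa [hk, Submodule.mem_bot] at this

private lemma vecMul_smul_one {k : Type} [Fintype k] [DecidableEq k] (c : ℂ) (v : k → ℂ) :
    v ᵥ* (c • (1 : Matrix k k ℂ)) = c • v := by
  ext i
  simp [Matrix.vecMul, dotProduct, Matrix.one_apply, mul_comm, mul_ite]

end AuxLemmas


/-- under observability and controllability, the order-`n` realization
`(A_d, B_d, C_d)` of `K_d(λ) = [λ⁻¹ W, λ⁻¹ V]` is observable and controllable,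
hence minimal. -/
theorem stmt_12 (p r m : ℕ) (hp : 0 < p) (hr : 0 < r) (hm : 0 < m)
    (A11 : Matrix (Fin p) (Fin p) ℝ) (A12 : Matrix (Fin p) (Fin r) ℝ)
    (A21 : Matrix (Fin r) (Fin p) ℝ) (A22 : Matrix (Fin r) (Fin r) ℝ)
    (B1 : Matrix (Fin p) (Fin m) ℝ) (B2 : Matrix (Fin r) (Fin m) ℝ)
    (hobs : ObsPair A12 A22)
    (hctrb : CtrbPair (fromBlocks A11 A12 A21 A22) (fromRows B1 B2))
    (K : Matrix (Fin r) (Fin p) ℝ) :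
    let Ad : Matrix (Fin p ⊕ Fin r) (Fin p ⊕ Fin r) ℝ :=
      fromBlocks 0 A12 0 (A22 + K * A12)
    let Bd : Matrix (Fin p ⊕ Fin r) (Fin p ⊕ Fin m) ℝ :=
      fromBlocks (A11 - A12 * K) B1 (AKmat A11 A12 A21 A22 K) (K * B1 + B2)
    let Cd : Matrix (Fin p) (Fin p ⊕ Fin r) ℝ :=
      fromCols (1 : Matrix (Fin p) (Fin p) ℝ) (0 : Matrix (Fin p) (Fin r) ℝ)
    (∀ μ : ℂ, (fromRows (mapC Ad - μ • (1 : Matrix (Fin p ⊕ Fin r) (Fin p ⊕ Fin r) ℂ))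
        (mapC Cd)).rank = p + r) ∧
    (∀ μ : ℂ, (fromCols (mapC Ad - μ • (1 : Matrix (Fin p ⊕ Fin r) (Fin p ⊕ Fin r) ℂ))
        (mapC Bd)).rank = p + r) := by
  intro Ad Bd Cd
  have cardpr : Fintype.card (Fin p ⊕ Fin r) = p + r := by simp
  constructor
  · -- observability
    intro μ
    simp only [Ad, Cd]
    rw [← cardpr]
    apply rank_eq_card_of_inj
    intro x hx
    rw [fromRows_mulVec] at hx
    have hA : (mapC (fromBlocks 0 A12 0 (A22 + K * A12)) -
        μ • (1 : Matrix (Fin p ⊕ Fin r) (Fin p ⊕ Fin r) ℂ)) *ᵥ x = 0 :=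
      funext fun i => congrFun hx (Sum.inl i)
    have hC : mapC (fromCols (1 : Matrix (Fin p) (Fin p) ℝ) 0) *ᵥ x = 0 :=
      funext fun i => congrFun hx (Sum.inr i)
    have hx1 : x ∘ Sum.inl = 0 := by
      rw [mapC_fromColumns, mapC_one, mapC_zero, ← Sum.elim_comp_inl_inr x,
        fromCols_mulVec_sumElim, one_mulVec, zero_mulVec, add_zero] at hC
      exact hC
    rw [sub_mulVec, smul_mulVec, one_mulVec, mapC_fromBlocks,
      fromBlocks_mulVec] at hA
    simp only [mapC_zero, zero_mulVec, zero_add] at hA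
    have e1 : mapC A12 *ᵥ (x ∘ Sum.inr) - μ • (x ∘ Sum.inl) = 0 :=
      funext fun i => congrFun hA (Sum.inl i)
    have e2 : mapC (A22 + K * A12) *ᵥ (x ∘ Sum.inr) - μ • (x ∘ Sum.inr) = 0 :=
      funext fun i => congrFun hA (Sum.inr i)
    have h12 : mapC A12 *ᵥ (x ∘ Sum.inr) = 0 := by
      rw [hx1] at e1; simpa using e1
    have h22 : (mapC A22 - μ • (1 : Matrix (Fin r) (Fin r) ℂ)) *ᵥ (x ∘ Sum.inr) = 0 := by
      rw [mapC_add, mapC_mul, add_mulVec, ← mulVec_mulVec, h12, mulVec_zero, add_zero] at e2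
      rw [sub_mulVec, smul_mulVec, one_mulVec]
      exact e2
    have hobs' := inj_of_rank_eq_card
      (fromRows (mapC A22 - μ • (1 : Matrix (Fin r) (Fin r) ℂ)) (mapC A12))
      (by rw [hobs μ]; simp) (x ∘ Sum.inr)
      (by rw [fromRows_mulVec, h22, h12]; funext i; cases i <;> rfl)
    funext i
    cases i with
    | inl a => exact congrFun hx1 a
    | inr a => exact congrFun hobs' a
  · -- controllability
    intro μ
    simp only [Ad, Bd]
    rw [← cardpr, ← Matrix.rank_transpose]
    apply rank_eq_card_of_inj
    intro y hy
    rw [mulVec_transpose, vecMul_fromCols] at hy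
    have hA : y ᵥ* (mapC (fromBlocks 0 A12 0 (A22 + K * A12)) -
        μ • (1 : Matrix (Fin p ⊕ Fin r) (Fin p ⊕ Fin r) ℂ)) = 0 :=
      funext fun i => congrFun hy (Sum.inl i)
    have hB : y ᵥ* mapC (fromBlocks (A11 - A12 * K) B1 (AKmat A11 A12 A21 A22 K)
        (K * B1 + B2)) = 0 :=
      funext fun i => congrFun hy (Sum.inr i)
    set yl : Fin p → ℂ := y ∘ Sum.inl with hyl
    set yr : Fin r → ℂ := y ∘ Sum.inr with hyr
    rw [vecMul_sub, vecMul_smul_one, mapC_fromBlocks, mapC_zero,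
      vecMul_fromBlocks] at hA
    have e1 : yl ᵥ* (0 : Matrix (Fin p) (Fin p) ℂ) + yr ᵥ* (0 : Matrix (Fin r) (Fin p) ℂ)
        - μ • yl = 0 := funext fun i => congrFun hA (Sum.inl i)
    simp only [vecMul_zero, add_zero, zero_sub, neg_eq_zero] at e1
    -- e1 : μ • yl = 0
    have e2 : yl ᵥ* mapC A12 + yr ᵥ* mapC (A22 + K * A12) - μ • yr = 0 :=
      funext fun i => congrFun hA (Sum.inr i)
    simp only [mapC_add, mapC_mul, vecMul_add] at e2
    have e2k := congrArg (fun v => v ᵥ* mapC K) e2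
    simp only [sub_vecMul, add_vecMul, vecMul_vecMul, zero_vecMul, smul_vecMul] at e2k
    rw [mapC_fromBlocks, vecMul_fromBlocks] at hB
    have e3 : yl ᵥ* mapC (A11 - A12 * K) + yr ᵥ* mapC (AKmat A11 A12 A21 A22 K) = 0 :=
      funext fun i => congrFun hB (Sum.inl i)
    simp only [AKmat, mapC_sub, mapC_add, mapC_mul, vecMul_sub, vecMul_add] at e3
    have e4 : yl ᵥ* mapC B1 + yr ᵥ* mapC (K * B1 + B2) = 0 :=
      funext fun i => congrFun hB (Sum.inr i)
    simp only [mapC_add, mapC_mul, vecMul_add] at e4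
    have hctrb' := inj_of_rank_eq_card
      (fromCols (mapC (fromBlocks A11 A12 A21 A22) -
        μ • (1 : Matrix (Fin p ⊕ Fin r) (Fin p ⊕ Fin r) ℂ)) (mapC (fromRows B1 B2)))ᵀ
      (by rw [Matrix.rank_transpose, hctrb μ]; exact cardpr.symm)
      (Sum.elim (yl + yr ᵥ* mapC K) yr)
    have comp1 : (yl + yr ᵥ* mapC K) ᵥ* mapC A11 + yr ᵥ* mapC A21
        - μ • (yl + yr ᵥ* mapC K) = 0 := by
      simp only [add_vecMul, vecMul_vecMul, smul_add]
      linear_combination (norm := module) e3 + e2k - e1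
    have comp2 : (yl + yr ᵥ* mapC K) ᵥ* mapC A12 + yr ᵥ* mapC A22 - μ • yr = 0 := by
      simp only [add_vecMul, vecMul_vecMul]
      linear_combination (norm := module) e2
    have comp3 : (yl + yr ᵥ* mapC K) ᵥ* mapC B1 + yr ᵥ* mapC B2 = 0 := by
      simp only [add_vecMul, vecMul_vecMul]
      linear_combination (norm := module) e4
    have hwA : Sum.elim (yl + yr ᵥ* mapC K) yr ᵥ*
        (mapC (fromBlocks A11 A12 A21 A22) -
          μ • (1 : Matrix (Fin p ⊕ Fin r) (Fin p ⊕ Fin r) ℂ)) = 0 := by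
      rw [vecMul_sub, vecMul_smul_one, mapC_fromBlocks, vecMul_fromBlocks]
      simp only [Sum.elim_comp_inl, Sum.elim_comp_inr]
      funext i
      cases i with
      | inl a => exact congrFun comp1 a
      | inr a => exact congrFun comp2 a
    have hwB : Sum.elim (yl + yr ᵥ* mapC K) yr ᵥ* mapC (fromRows B1 B2) = 0 := by
      rw [mapC_fromRows, sumElim_vecMul_fromRows]
      exact comp3
    have hw := hctrb' (by
      rw [mulVec_transpose, vecMul_fromCols, hwA, hwB]
      funext i; cases i <;> rfl)
    have hyr0 : yr = 0 := funext fun i => congrFun hw (Sum.inr i)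
    have hyl0 : yl = 0 := by
      have h5 : yl + yr ᵥ* mapC K = 0 := funext fun i => congrFun hw (Sum.inl i)
      rw [hyr0, zero_vecMul, add_zero] at h5
      exact h5
    funext i
    cases i with
    | inl a => exact congrFun hyl0 a
    | inr a => exact congrFun hyr0 a
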